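/- Let p > 3 be a prime and let E₁(x) = x² + p, E₂(x) = E₁(x)² + (p−1)p³x ∈ ℤ_p[x]. Then E₂ is irreducible over ℚ_p and the extension ℚ_p(θ)/ℚ_p generated by a root θ of E₂ is totally ramified of degree 4, with v_p(θ) = 1/2 and v_p(E₁(θ)) = 7/4. -/

import Mathlib

open Polynomial

variable {p : ℕ} [hp : Fact p.Prime]



lemma val_neg (x : ℚ_[p]) : (-x).valuation = x.valuation := by
  by_cases hx : x = 0
  · simp [hx]
  · have : (-x) = (-1 : ℤ) * x := by push_cast; ring
    rw [this, Padic.valuation_mul (by norm_num) hx, Padic.valuation_intCast]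
    simp [padicValInt]

lemma val_pow (x : ℚ_[p]) (hx : x ≠ 0) (n : ℕ) : (x ^ n).valuation = n * x.valuation := by
  induction n with
  | zero => simp [Padic.valuation_one]
  | succ n ih =>
    rw [pow_succ, Padic.valuation_mul (pow_ne_zero n hx) hx, ih]
    push_cast; ring

lemma val_inv (x : ℚ_[p]) (hx : x ≠ 0) : (x⁻¹).valuation = -x.valuation := by
  have h : x * x⁻¹ = 1 := mul_inv_cancel₀ hx
  have := Padic.valuation_mul (p := p) hx (inv_ne_zero hx)
  rw [h, Padic.valuation_one] at this
  omega

lemma val_pm1 (hp3 : 3 < p) : ((p : ℚ_[p]) - 1).valuation = 0 := by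
  have h : ((p : ℚ_[p]) - 1) = ((p - 1 : ℕ) : ℚ_[p]) := by
    push_cast [Nat.cast_sub (by omega : 1 ≤ p)]; ring
  rw [h, Padic.valuation_natCast, padicValNat.eq_zero_of_not_dvd]
  · simp
  · intro hdvd
    have := Nat.le_of_dvd (by omega) hdvd
    omega

lemma pm1_ne_zero (hp3 : 3 < p) : ((p : ℚ_[p]) - 1) ≠ 0 := by
  have h : ((p : ℚ_[p]) - 1) = ((p - 1 : ℕ) : ℚ_[p]) := by
    push_cast [Nat.cast_sub (by omega : 1 ≤ p)]; ring
  rw [h]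
  exact Nat.cast_ne_zero.mpr (by omega)

lemma val_two (hp3 : 3 < p) : (2 : ℚ_[p]).valuation = 0 := by
  have h : (2 : ℚ_[p]) = ((2 : ℕ) : ℚ_[p]) := by norm_num
  rw [h, Padic.valuation_natCast, padicValNat.eq_zero_of_not_dvd]
  · simp
  · intro hdvd; have := Nat.le_of_dvd (by omega) hdvd; omega

lemma p_ne_zero : (p : ℚ_[p]) ≠ 0 := by
  exact_mod_cast Nat.cast_ne_zero.mpr hp.1.ne_zero


lemma val_norm_lt {x y : ℚ_[p]} (hx : x ≠ 0) (hy : y ≠ 0)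
    (h : x.valuation < y.valuation) : ‖y‖ < ‖x‖ := by
  rw [Padic.norm_eq_zpow_neg_valuation hx, Padic.norm_eq_zpow_neg_valuation hy]
  have h1p : 1 < (p : ℝ) := by exact_mod_cast hp.1.one_lt
  exact zpow_lt_zpow_right₀ h1p (by omega)

lemma val_add_of_lt {x y : ℚ_[p]} (hx : x ≠ 0) (hy : y ≠ 0)
    (h : x.valuation < y.valuation) : x + y ≠ 0 ∧ (x + y).valuation = x.valuation := by
  have hn := val_norm_lt hx hy h
  have hne : ‖x‖ ≠ ‖y‖ := (ne_of_lt hn).symm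
  have hmax : ‖x + y‖ = ‖x‖ := by
    rw [Padic.add_eq_max_of_ne hne, max_eq_left hn.le]
  have hxy : x + y ≠ 0 := by
    intro h0; rw [h0, norm_zero] at hmax; exact hx (norm_eq_zero.mp hmax.symm)
  refine ⟨hxy, ?_⟩
  rw [Padic.norm_eq_zpow_neg_valuation hxy, Padic.norm_eq_zpow_neg_valuation hx] at hmax
  have h1p : 1 < (p : ℝ) := by exact_mod_cast hp.1.one_lt
  have := zpow_right_injective₀ (by linarith) (ne_of_gt h1p) hmax
  omega


lemma no_root (hp3 : 3 < p) (r : ℚ_[p]) :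
    r^4 + 2*(p:ℚ_[p])*r^2 + ((p:ℚ_[p])-1)*(p:ℚ_[p])^3*r + (p:ℚ_[p])^2 ≠ 0 := by
  intro h
  have hp0 : (p : ℚ_[p]) ≠ 0 := p_ne_zero
  have hp20 : (p : ℚ_[p])^2 ≠ 0 := pow_ne_zero _ hp0
  have hr : r ≠ 0 := by
    intro h0; rw [h0] at h; simp at h; exact hp0 (by exact_mod_cast pow_eq_zero_iff (n:=2) (by norm_num) |>.mp (by linarith [h]))
  have h20 : (2:ℚ_[p]) ≠ 0 := two_ne_zero
  have hpm1 : ((p : ℚ_[p]) - 1) ≠ 0 := pm1_ne_zero hp3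
  set t1 := r^4 with ht1
  set t2 := 2*(p:ℚ_[p])*r^2 with ht2
  set t3 := ((p:ℚ_[p])-1)*(p:ℚ_[p])^3*r with ht3
  set t4 := (p:ℚ_[p])^2 with ht4
  set vr := r.valuation with hvr
  have h10 : t1 ≠ 0 := pow_ne_zero _ hr
  have h2ne : t2 ≠ 0 := mul_ne_zero (mul_ne_zero h20 hp0) (pow_ne_zero _ hr)
  have h3ne : t3 ≠ 0 := mul_ne_zero (mul_ne_zero hpm1 (pow_ne_zero _ hp0)) hr
  have vp : (p:ℚ_[p]).valuation = 1 := Padic.valuation_p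
  have v1 : t1.valuation = 4 * vr := val_pow r hr 4
  have v2 : t2.valuation = 1 + 2 * vr := by
    rw [ht2, Padic.valuation_mul (mul_ne_zero h20 hp0) (pow_ne_zero _ hr),
      Padic.valuation_mul h20 hp0, val_two hp3, vp, val_pow r hr 2]
    ring
  have v3 : t3.valuation = 3 + vr := by
    rw [ht3, Padic.valuation_mul (mul_ne_zero hpm1 (pow_ne_zero _ hp0)) hr,
      Padic.valuation_mul hpm1 (pow_ne_zero _ hp0), val_pm1 hp3, val_pow _ hp0 3, vp]
    ring
  have v4 : t4.valuation = 2 := by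
    rw [ht4, val_pow _ hp0 2, vp]; ring
  rcases le_or_gt 1 vr with hge | hle
  · -- vr ≥ 1
    have hs : t1 + t2 + t3 = -t4 := by linear_combination h
    have hsne : t1 + t2 + t3 ≠ 0 := by rw [hs]; exact neg_ne_zero.mpr hp20
    have hv : (t1 + t2 + t3).valuation = 2 := by rw [hs, val_neg, v4]
    by_cases h23 : t2 + t3 = 0
    · have : t1 + t2 + t3 = t1 := by rw [add_assoc, h23, add_zero]
      rw [this, v1] at hv; omega
    · have hmin2 := Padic.le_valuation_add (x := t2) (y := t3) h23
      have hmin1 := Padic.le_valuation_add (x := t1) (y := t2 + t3)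
        (by rwa [← add_assoc])
      rw [← add_assoc] at hmin1
      rw [hv, v1] at hmin1
      rw [v2, v3] at hmin2
      omega
  · -- vr ≤ 0
    have hvr0 : vr ≤ 0 := by omega
    have hs : t2 + t3 + t4 = -t1 := by linear_combination h
    have hsne : t2 + t3 + t4 ≠ 0 := by rw [hs]; exact neg_ne_zero.mpr h10
    have hv : (t2 + t3 + t4).valuation = 4 * vr := by rw [hs, val_neg, v1]
    by_cases h34 : t3 + t4 = 0
    · have : t2 + t3 + t4 = t2 := by rw [add_assoc, h34, add_zero]
      rw [this, v2] at hv; omega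
    · have hmin2 := Padic.le_valuation_add (x := t3) (y := t4) h34
      have hmin1 := Padic.le_valuation_add (x := t2) (y := t3 + t4)
        (by rwa [← add_assoc])
      rw [← add_assoc] at hmin1
      rw [hv, v2] at hmin1
      rw [v3, v4] at hmin2
      omega


-- core: assumes v b < v d
lemma no_quad_core (hp3 : 3 < p) (a b d : ℚ_[p])
    (E2 : b + d = 2*(p:ℚ_[p]) + a^2) (E1 : a*(d - b) = ((p:ℚ_[p])-1)*(p:ℚ_[p])^3)
    (E0 : b*d = (p:ℚ_[p])^2) (hlt : b.valuation < d.valuation) : False := by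
  have hp0 : (p : ℚ_[p]) ≠ 0 := p_ne_zero
  have vp : (p:ℚ_[p]).valuation = 1 := Padic.valuation_p
  have hb : b ≠ 0 := by rintro rfl; simp at E0; exact pow_ne_zero 2 hp0 E0.symm
  have hd : d ≠ 0 := by rintro rfl; simp at E0; exact pow_ne_zero 2 hp0 E0.symm
  have ha : a ≠ 0 := by
    rintro rfl
    simp at E1
    rcases E1 with h | h
    · exact pm1_ne_zero hp3 h
    · exact hp.1.ne_zero h
  have hsum : b.valuation + d.valuation = 2 := by
    have := Padic.valuation_mul hb hd
    rw [E0, val_pow _ hp0 2, vp] at this; omega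
  have hvb : b.valuation ≤ 0 := by omega
  -- v(d - b) = v b
  have hdb := val_add_of_lt (neg_ne_zero.mpr hb) hd (by rw [val_neg]; exact hlt)
  have hdb' : d - b ≠ 0 ∧ (d - b).valuation = b.valuation := by
    rw [sub_eq_neg_add]; exact ⟨hdb.1, by rw [hdb.2, val_neg]⟩
  have hE1v : a.valuation + b.valuation = 3 := by
    have := Padic.valuation_mul ha hdb'.1
    rw [E1, Padic.valuation_mul (pm1_ne_zero hp3) (pow_ne_zero 3 hp0),
      val_pm1 hp3, val_pow _ hp0 3, vp, hdb'.2] at this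
    omega
  -- v(b + d) = v b
  have hbd := val_add_of_lt hb hd hlt
  -- v(2p + a²) = 1
  have h2p : (2*(p:ℚ_[p])) ≠ 0 := mul_ne_zero two_ne_zero hp0
  have v2p : (2*(p:ℚ_[p])).valuation = 1 := by
    rw [Padic.valuation_mul two_ne_zero hp0, val_two hp3, vp]; norm_num
  have va2 : (a^2).valuation = 2 * a.valuation := val_pow a ha 2
  have hrhs := val_add_of_lt h2p (pow_ne_zero 2 ha) (by rw [v2p, va2]; omega)
  rw [← E2, hbd.2, v2p] at hrhs
  omega

lemma no_quad (hp3 : 3 < p) (a b c d : ℚ_[p])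
    (e3 : a + c = 0)
    (e2 : b + d + a*c = 2*(p:ℚ_[p]))
    (e1 : a*d + b*c = ((p:ℚ_[p])-1)*(p:ℚ_[p])^3)
    (e0 : b*d = (p:ℚ_[p])^2) : False := by
  have hp0 : (p : ℚ_[p]) ≠ 0 := p_ne_zero
  have vp : (p:ℚ_[p]).valuation = 1 := Padic.valuation_p
  have hc : c = -a := by linear_combination e3
  subst hc
  have E2 : b + d = 2*(p:ℚ_[p]) + a^2 := by linear_combination e2
  have E1 : a*(d - b) = ((p:ℚ_[p])-1)*(p:ℚ_[p])^3 := by linear_combination e1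
  have hb : b ≠ 0 := by rintro rfl; simp at e0; exact pow_ne_zero 2 hp0 e0.symm
  have hd : d ≠ 0 := by rintro rfl; simp at e0; exact pow_ne_zero 2 hp0 e0.symm
  have ha : a ≠ 0 := by
    rintro rfl; simp at E1
    rcases E1 with h | h
    · exact pm1_ne_zero hp3 h
    · exact hp.1.ne_zero h
  rcases lt_trichotomy b.valuation d.valuation with hlt | heq | hgt
  · exact no_quad_core hp3 a b d E2 E1 e0 hlt
  · -- v b = v d = 1; key identity a² b = (b - p)²
    have hsum : b.valuation + d.valuation = 2 := by
      have := Padic.valuation_mul hb hd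
      rw [e0, val_pow _ hp0 2, vp] at this; omega
    have hvb : b.valuation = 1 := by omega
    have key : a^2 * b = (b - (p:ℚ_[p]))^2 := by
      have : b * (b + d - 2*(p:ℚ_[p])) = (b - (p:ℚ_[p]))^2 := by
        have hbd : b * d = (p:ℚ_[p])^2 := e0
        linear_combination hbd
      rw [E2] at this; linear_combination this
    by_cases hbp : b - (p:ℚ_[p]) = 0
    · rw [hbp] at key
      simp at key
      rcases key with h | h
      · exact ha h
      · exact hb h
    · have hv := Padic.valuation_mul (pow_ne_zero 2 ha) hb
      rw [key, val_pow _ hbp 2, val_pow _ ha 2, hvb] at hv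
      omega
  · exact no_quad_core hp3 (-a) d b (by linear_combination E2)
      (by linear_combination E1) (by linear_combination e0) hgt

lemma monic_deg2_eq {K : Type*} [Field K] (q : K[X]) (hm : q.Monic) (h2 : q.natDegree = 2) :
    q = X^2 + C (q.coeff 1) * X + C (q.coeff 0) := by
  ext n
  have hlc : q.coeff 2 = 1 := by
    have := hm.leadingCoeff
    rwa [leadingCoeff, h2] at this
  match n with
  | 0 => simp
  | 1 => simp
  | 2 => simp [hlc, coeff_X_pow, coeff_C]
  | (n+3) =>
    rw [Polynomial.coeff_eq_zero_of_natDegree_lt (by omega : q.natDegree < n + 3)]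
    simp [coeff_X_pow, coeff_C]

lemma quartic_coeffs {K : Type*} [Field K] (e3 e2 e1 e0 f3 f2 f1 f0 : K)
    (h : X^4 + C e3*X^3 + C e2*X^2 + C e1*X + C e0
       = X^4 + C f3*X^3 + C f2*X^2 + C f1*X + C f0) :
    e3 = f3 ∧ e2 = f2 ∧ e1 = f1 ∧ e0 = f0 := by
  refine ⟨?_, ?_, ?_, ?_⟩
  · have := congrArg (fun q => Polynomial.coeff q 3) h
    simpa [coeff_X_pow, coeff_C] using this
  · have := congrArg (fun q => Polynomial.coeff q 2) h
    simpa [coeff_X_pow, coeff_C] using this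
  · have := congrArg (fun q => Polynomial.coeff q 1) h
    simpa [coeff_X_pow, coeff_C] using this
  · have := congrArg (fun q => Polynomial.coeff q 0) h
    simpa [coeff_X_pow, coeff_C] using this

example {K : Type*} [Field K] (a b c d : K) :
    (X^2 + C a * X + C b) * (X^2 + C c * X + C d)
      = X^4 + C (a+c)*X^3 + C (b+d+a*c)*X^2 + C (a*d+b*c)*X + C (b*d) := by
  simp only [C_add, C_mul]; ring


lemma F_std (hp3 : 3 < p) :
    (X ^ 2 + C (p : ℚ_[p])) ^ 2 + C ((p : ℚ_[p]) - 1) * C ((p : ℚ_[p]) ^ 3) * X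
    = X^4 + C (0:ℚ_[p])*X^3 + C (2*(p:ℚ_[p]))*X^2
        + C (((p:ℚ_[p])-1)*(p:ℚ_[p])^3)*X + C ((p:ℚ_[p])^2) := by
  simp only [map_mul, map_sub, map_pow, map_one, map_zero, map_ofNat]
  ring

lemma F_monic : ((X ^ 2 + C (p : ℚ_[p])) ^ 2 + C ((p : ℚ_[p]) - 1) * C ((p : ℚ_[p]) ^ 3) * X).Monic := by
  monicity!

lemma F_natDegree :
    ((X ^ 2 + C (p : ℚ_[p])) ^ 2 + C ((p : ℚ_[p]) - 1) * C ((p : ℚ_[p]) ^ 3) * X).natDegree = 4 := by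
  compute_degree!

lemma F_no_root (hp3 : 3 < p) (r : ℚ_[p]) :
    ¬ ((X ^ 2 + C (p : ℚ_[p])) ^ 2 + C ((p : ℚ_[p]) - 1) * C ((p : ℚ_[p]) ^ 3) * X).IsRoot r := by
  intro h
  simp only [IsRoot, eval_add, eval_mul, eval_pow, eval_C, eval_X] at h
  exact no_root hp3 r (by linear_combination h)

lemma root_of_deg1_factor {K : Type*} [Field K] (F g h : K[X]) (hgh : F = g * h)
    (h1 : g.natDegree = 1) : ∃ r, F.IsRoot r := by
  have hg := Polynomial.eq_X_add_C_of_natDegree_le_one (le_of_eq h1)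
  have hc1 : g.coeff 1 ≠ 0 := by
    intro h0
    rw [← h1] at h0
    exact (Polynomial.leadingCoeff_ne_zero.mpr (fun hz => by simp [hz] at h1)) h0
  refine ⟨-(g.coeff 0) / (g.coeff 1), ?_⟩
  have hgr : g.eval (-(g.coeff 0) / (g.coeff 1)) = 0 := by
    have e := congrArg (fun q => q.eval (-(g.coeff 0) / (g.coeff 1))) hg
    simp only [eval_add, eval_mul, eval_C, eval_X] at e
    rw [e]
    field_simp
    ring
  rw [hgh]
  simp [IsRoot, hgr]

theorem F_irreducible (hp3 : 3 < p) :
    Irreducible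
      ((X ^ 2 + C (p : ℚ_[p])) ^ 2 + C ((p : ℚ_[p]) - 1) * C ((p : ℚ_[p]) ^ 3) * X) := by
  set F : ℚ_[p][X] := (X ^ 2 + C (p : ℚ_[p])) ^ 2 + C ((p : ℚ_[p]) - 1) * C ((p : ℚ_[p]) ^ 3) * X with hFdef
  have hmon : F.Monic := F_monic
  have hdeg : F.natDegree = 4 := F_natDegree
  rw [irreducible_iff]
  constructor
  · intro hu
    have := Polynomial.natDegree_eq_zero_of_isUnit hu
    omega
  · intro g h hgh
    by_contra hcon
    push_neg at hcon
    obtain ⟨hgu, hhu⟩ := hcon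
    have hF0 : F ≠ 0 := hmon.ne_zero
    have hg0 : g ≠ 0 := by rintro rfl; simp at hgh; exact hF0 hgh
    have hh0 : h ≠ 0 := by rintro rfl; simp at hgh; exact hF0 hgh
    have hsum : g.natDegree + h.natDegree = 4 := by
      rw [← hdeg, hgh, Polynomial.natDegree_mul hg0 hh0]
    have hgd : g.natDegree ≠ 0 := by
      intro h0
      have := Polynomial.eq_C_of_natDegree_eq_zero h0
      exact hgu (this ▸ Polynomial.isUnit_C.mpr (isUnit_iff_ne_zero.mpr (by
        intro hc; apply hg0; rw [this, hc, map_zero])))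
    have hhd : h.natDegree ≠ 0 := by
      intro h0
      have := Polynomial.eq_C_of_natDegree_eq_zero h0
      exact hhu (this ▸ Polynomial.isUnit_C.mpr (isUnit_iff_ne_zero.mpr (by
        intro hc; apply hh0; rw [this, hc, map_zero])))
    -- case on degree of g
    have hgle : g.natDegree ≤ 4 := by omega
    have hgge : 0 ≤ g.natDegree := Nat.zero_le _
    interval_cases hgn : g.natDegree
    · exact hgd rfl
    · obtain ⟨r, hr⟩ := root_of_deg1_factor F g h hgh hgn
      exact F_no_root hp3 r hr
    · -- 2,2 case
      have hhn : h.natDegree = 2 := by omega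
      set u := g.leadingCoeff with hu
      have hune : u ≠ 0 := Polynomial.leadingCoeff_ne_zero.mpr hg0
      set g' := g * C u⁻¹ with hg'
      set h' := h * C u with hh'
      have hform : F = g' * h' := by
        rw [hgh, hg', hh']
        rw [mul_mul_mul_comm, ← map_mul, inv_mul_cancel₀ hune, map_one, mul_one]
      have hg'm : g'.Monic := Polynomial.monic_mul_leadingCoeff_inv hg0
      have hlcF : g.leadingCoeff * h.leadingCoeff = 1 := by
        have := hmon.leadingCoeff
        rw [hgh, Polynomial.leadingCoeff_mul] at this
        exact this
      have hh'm : h'.Monic := by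
        unfold Polynomial.Monic
        rw [hh', Polynomial.leadingCoeff_mul, Polynomial.leadingCoeff_C]
        linear_combination hlcF
      have hg'd : g'.natDegree = 2 := by
        rw [hg', Polynomial.natDegree_mul_C (inv_ne_zero hune), hgn]
      have hh'd : h'.natDegree = 2 := by
        rw [hh', Polynomial.natDegree_mul_C hune, hhn]
      have hgeq := monic_deg2_eq g' hg'm hg'd
      have hheq := monic_deg2_eq h' hh'm hh'd
      set a := g'.coeff 1
      set b := g'.coeff 0
      set c := h'.coeff 1
      set d := h'.coeff 0
      have hexp : g' * h'
          = X^4 + C (a+c)*X^3 + C (b+d+a*c)*X^2 + C (a*d+b*c)*X + C (b*d) := by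
        rw [hgeq, hheq]
        simp only [C_add, C_mul]
        ring
      have hstd := F_std (p := p) hp3
      have hkey : X^4 + C (a+c)*X^3 + C (b+d+a*c)*X^2 + C (a*d+b*c)*X + C (b*d)
          = X^4 + C (0:ℚ_[p])*X^3 + C (2*(p:ℚ_[p]))*X^2
            + C (((p:ℚ_[p])-1)*(p:ℚ_[p])^3)*X + C ((p:ℚ_[p])^2) := by
        rw [← hexp, ← hform, hFdef, hstd]
      obtain ⟨q3, q2, q1, q0⟩ := quartic_coeffs _ _ _ _ _ _ _ _ hkey
      exact no_quad hp3 a b c d q3 q2 q1 q0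
    · -- degree 3: h degree 1
      have hhn : h.natDegree = 1 := by omega
      obtain ⟨r, hr⟩ := root_of_deg1_factor F h g (by rw [hgh, mul_comm]) hhn
      exact F_no_root hp3 r hr
    · omega


theorem part2 (hp3 : 3 < p) (L : Type) [Field L] [Algebra ℚ_[p] L] (θ : L)
    (hroot : Polynomial.aeval θ
        ((X ^ 2 + C (p : ℚ_[p])) ^ 2 + C ((p : ℚ_[p]) - 1) * C ((p : ℚ_[p]) ^ 3) * X) = 0)
    (hadj : Algebra.adjoin ℚ_[p] {θ} = ⊤) :
    Module.finrank ℚ_[p] L = 4 ∧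
      (∃ x : L, x ≠ 0 ∧ (Algebra.norm ℚ_[p] x).valuation = 1) ∧
      (Algebra.norm ℚ_[p] θ).valuation = 2 ∧
      (Algebra.norm ℚ_[p] (θ ^ 2 + (p : L))).valuation = 7 := by
  set F : ℚ_[p][X] := (X ^ 2 + C (p : ℚ_[p])) ^ 2 + C ((p : ℚ_[p]) - 1) * C ((p : ℚ_[p]) ^ 3) * X
    with hFdef
  have hp0 : (p : ℚ_[p]) ≠ 0 := p_ne_zero
  have vp : (p:ℚ_[p]).valuation = 1 := Padic.valuation_p
  have hint : IsIntegral ℚ_[p] θ := ⟨F, F_monic, by rwa [← Polynomial.aeval_def]⟩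
  have hmin : minpoly ℚ_[p] θ = F :=
    (minpoly.eq_of_irreducible_of_monic (F_irreducible hp3) hroot F_monic).symm
  have hFdeg : F.natDegree = 4 := by rw [hFdef]; compute_degree!
  -- power basis
  let e : (Algebra.adjoin ℚ_[p] {θ}) ≃ₐ[ℚ_[p]] L :=
    (Subalgebra.equivOfEq _ ⊤ hadj).trans Subalgebra.topEquiv
  let pb : PowerBasis ℚ_[p] L := (Algebra.adjoin.powerBasis hint).map e
  have hgen : pb.gen = θ := by
    simp [pb, e, Algebra.adjoin.powerBasis_gen]
  have hdim : pb.dim = 4 := by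
    have := PowerBasis.natDegree_minpoly pb
    rw [hgen, hmin, hFdeg] at this
    omega
  haveI : Module.Finite ℚ_[p] L := Module.Finite.of_basis pb.basis
  have hrank : Module.finrank ℚ_[p] L = 4 := by
    rw [pb.finrank, hdim]
  -- norm of θ
  have hF0 : F.coeff 0 = (p:ℚ_[p])^2 := by
    rw [Polynomial.coeff_zero_eq_eval_zero, hFdef]
    simp
  have hNθ : Algebra.norm ℚ_[p] θ = (p:ℚ_[p])^2 := by
    have := Algebra.PowerBasis.norm_gen_eq_coeff_zero_minpoly pb
    rw [hgen, hmin, hdim, hF0] at this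
    norm_num at this
    exact this
  have hvNθ : (Algebra.norm ℚ_[p] θ).valuation = 2 := by
    rw [hNθ, val_pow _ hp0 2, vp]; ring
  -- s = θ² + p
  set s : L := θ ^ 2 + (p : L) with hs
  have hpL : (p : L) = algebraMap ℚ_[p] L (p : ℚ_[p]) := by
    rw [map_natCast]
  have hcne : (-(((p:ℚ_[p])-1) * (p:ℚ_[p])^3)) ≠ 0 :=
    neg_ne_zero.mpr (mul_ne_zero (pm1_ne_zero hp3) (pow_ne_zero 3 hp0))
  have hs2 : s ^ 2 = algebraMap ℚ_[p] L (-(((p:ℚ_[p])-1) * (p:ℚ_[p])^3)) * θ := by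
    have hroot' := hroot
    rw [hFdef] at hroot'
    simp only [map_add, Polynomial.aeval_X, map_pow, Polynomial.aeval_C, map_mul] at hroot'
    rw [hs, hpL, map_neg, map_mul, map_pow]
    linear_combination hroot'
  have hinj := (algebraMap ℚ_[p] L).injective
  have hθ0 : θ ≠ 0 := by
    intro h0
    have hz : s ^ 2 = 0 := by rw [hs2, h0, mul_zero]
    have hsz : s = 0 := by
      exact pow_eq_zero_iff (two_ne_zero) |>.mp hz
    rw [hs, h0] at hsz
    have hpz : (p : L) = 0 := by linear_combination hsz
    rw [hpL] at hpz
    exact hp0 (hinj (by rw [hpz, map_zero]))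
  have halg : algebraMap ℚ_[p] L (-(((p:ℚ_[p])-1) * (p:ℚ_[p])^3)) ≠ 0 := by
    intro hz
    exact hcne (hinj (by rw [hz, map_zero]))
  have hs0 : s ≠ 0 := by
    intro h0
    have h2 : s ^ 2 ≠ 0 := hs2 ▸ mul_ne_zero halg hθ0
    exact h2 (by rw [h0]; ring)
  have hNs0 : Algebra.norm ℚ_[p] s ≠ 0 := (Algebra.norm_ne_zero_iff).mpr hs0
  have hNs2 : (Algebra.norm ℚ_[p] s) ^ 2
      = (-(((p:ℚ_[p])-1) * (p:ℚ_[p])^3)) ^ 4 * (p:ℚ_[p])^2 := by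
    rw [← map_pow, hs2, map_mul, Algebra.norm_algebraMap, hrank, hNθ]
  have hvNs : (Algebra.norm ℚ_[p] s).valuation = 7 := by
    have h1 := val_pow _ hNs0 2
    rw [hNs2] at h1
    have h2 : ((-(((p:ℚ_[p])-1) * (p:ℚ_[p])^3)) ^ 4 * (p:ℚ_[p])^2).valuation = 14 := by
      rw [Padic.valuation_mul (pow_ne_zero 4 hcne) (pow_ne_zero 2 hp0),
        val_pow _ hcne 4, val_pow _ hp0 2, vp]
      have hv3 : (-(((p:ℚ_[p])-1) * (p:ℚ_[p])^3)).valuation = 3 := by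
        have : (-(((p:ℚ_[p])-1) * (p:ℚ_[p])^3)) = (1 - (p:ℚ_[p])) * (p:ℚ_[p])^3 := by ring
        rw [this, Padic.valuation_mul (by
            intro hz
            apply pm1_ne_zero hp3
            linear_combination -hz) (pow_ne_zero 3 hp0), val_pow _ hp0 3, vp]
        have : ((1:ℚ_[p]) - (p:ℚ_[p])).valuation = 0 := by
          have := val_pm1 (p := p) hp3
          have hneg : ((1:ℚ_[p]) - (p:ℚ_[p])) = -((p:ℚ_[p]) - 1) := by ring
          rw [hneg]
          rw [show -((p:ℚ_[p])-1) = (-1 : ℤ) * ((p:ℚ_[p])-1) by push_cast; ring,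
            Padic.valuation_mul (by norm_num) (pm1_ne_zero hp3), Padic.valuation_intCast]
          simp [padicValInt, this]
        rw [this]; ring
      rw [hv3]; ring
    omega
  refine ⟨hrank, ?_, hvNθ, hvNs⟩
  -- witness
  refine ⟨θ * s * algebraMap ℚ_[p] L (((p:ℚ_[p])^2)⁻¹), ?_, ?_⟩
  · exact mul_ne_zero (mul_ne_zero hθ0 hs0)
      (by
        intro h0
        exact (inv_ne_zero (pow_ne_zero 2 hp0)) (hinj (by rw [h0, map_zero])))
  · rw [map_mul, map_mul, Algebra.norm_algebraMap, hrank, hNθ]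
    have hinv : ((((p:ℚ_[p])^2)⁻¹)^4) ≠ 0 := pow_ne_zero 4 (inv_ne_zero (pow_ne_zero 2 hp0))
    rw [Padic.valuation_mul (mul_ne_zero (pow_ne_zero 2 hp0) hNs0) hinv,
      Padic.valuation_mul (pow_ne_zero 2 hp0) hNs0,
      val_pow _ hp0 2, vp, hvNs, val_pow _ (inv_ne_zero (pow_ne_zero 2 hp0)) 4,
      val_inv _ (pow_ne_zero 2 hp0), val_pow _ hp0 2, vp]
    ring


/-- for a prime `p > 3`, the polynomial
`E₂(x) = (x² + p)² + (p-1)p³ x` is irreducible over `ℚ_p`, the extension generated by a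
root `θ` is totally ramified of degree `4` (witnessed by an element of norm-valuation `1`),
and `v_p(θ) = 1/2`, `v_p(E₁(θ)) = 7/4`, expressed via
`v_p(N(θ)) = 4·(1/2) = 2` and `v_p(N(θ² + p)) = 4·(7/4) = 7`. -/
theorem E2_irreducible_totally_ramified (p : ℕ) [Fact p.Prime] (hp3 : 3 < p) :
    Irreducible
        ((X ^ 2 + C (p : ℚ_[p])) ^ 2 + C ((p : ℚ_[p]) - 1) * C ((p : ℚ_[p]) ^ 3) * X) ∧
      ∀ (L : Type) [Field L] [Algebra ℚ_[p] L] (θ : L),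
        Polynomial.aeval θ
            ((X ^ 2 + C (p : ℚ_[p])) ^ 2 + C ((p : ℚ_[p]) - 1) * C ((p : ℚ_[p]) ^ 3) * X) = 0 →
        Algebra.adjoin ℚ_[p] {θ} = ⊤ →
        Module.finrank ℚ_[p] L = 4 ∧
          (∃ x : L, x ≠ 0 ∧ (Algebra.norm ℚ_[p] x).valuation = 1) ∧
          (Algebra.norm ℚ_[p] θ).valuation = 2 ∧
          (Algebra.norm ℚ_[p] (θ ^ 2 + (p : L))).valuation = 7 := by
  exact ⟨F_irreducible hp3, fun L _ _ θ h1 h2 => part2 hp3 L θ h1 h2⟩
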